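/- arXiv:2308.07278 — 6 statements merged into one kernel-verified Lean document; each statement's English description precedes it below -/
import Mathlib

section
/- For every odd b ≥ 3 there exists a 2×b nearly magic rectangle: a 2×b array containing each of 1,…,2b exactly once, with all column sums equal, and with the two row sums differing by exactly 1. -/
open Finset

private lemma gauss_Icc (a n : ℕ) : (∑ j ∈ Finset.Icc a (a+n), j) * 2 = (2*a+n)*(n+1) := by
  induction n with
  | zero => simp; ring
  | succ n ih =>
    rw [show a + (n+1) = (a+n) + 1 from rfl, Finset.sum_Icc_succ_top (by omega)]
    ring_nf
    ring_nf at ih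
    omega

/-- For every odd `b ≥ 3` there exists a `2 × b` nearly magic rectangle: entries exactly
`1,…,2b`, all column sums equal, and the two row sums differing by exactly 1. -/
theorem stmt_3 (b : ℕ) (hb : 3 ≤ b) (hodd : Odd b) :
    ∃ f : Fin 2 → Fin b → ℕ,
      (∀ i j, f i j ∈ Finset.Icc 1 (2 * b)) ∧
      Function.Injective (fun p : Fin 2 × Fin b => f p.1 p.2) ∧
      (∃ c, ∀ j, ∑ i, f i j = c) ∧
      ((∑ j, f 0 j) = (∑ j, f 1 j) + 1 ∨ (∑ j, f 1 j) = (∑ j, f 0 j) + 1) := by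
  obtain ⟨m, hm⟩ := hodd
  have hm1 : 1 ≤ m := by omega
  set cond : ℕ → Prop := fun j => m - m/2 ≤ j ∧ j ≤ m + m/2 ∧ (m % 2 = 1 ∨ j ≠ m) with hcond
  have hdec : DecidablePred cond := fun j => by unfold cond; infer_instance
  set F : Finset ℕ := (Finset.range b).filter cond with hF
  -- key facts about F
  have hcards : F.card = m ∧ (∑ j ∈ F, j) = m * m := by
    rcases Nat.even_or_odd m with he | ho
    · have h2 : m % 2 = 0 := Nat.even_iff.mp he
      have hFeq : F = (Finset.Icc (m - m/2) (m + m/2)).erase m := by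
        ext j
        simp only [hF, Finset.mem_filter, Finset.mem_range, Finset.mem_erase, Finset.mem_Icc,
          hcond]
        omega
      have hmem : m ∈ Finset.Icc (m - m/2) (m + m/2) := by
        simp only [Finset.mem_Icc]; omega
      have hcard : (Finset.Icc (m - m/2) (m + m/2)).card = m + 1 := by
        rw [Nat.card_Icc]; omega
      have hsum := gauss_Icc (m - m/2) (2*(m/2))
      rw [show m - m/2 + 2*(m/2) = m + m/2 by omega] at hsum
      have hadd := Finset.add_sum_erase _ (fun j => j) hmem
      beta_reduce at hadd
      constructor
      · rw [hFeq, Finset.card_erase_of_mem hmem, hcard]; omega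
      · rw [hFeq]
        have h3 : 2*(m - m/2) + 2*(m/2) = 2*m := by omega
        rw [h3] at hsum
        have h4 : 2*(m/2) + 1 = m + 1 := by omega
        rw [h4] at hsum
        have h5 : 2*m*(m+1) = 2*(m*m) + 2*m := by ring
        rw [h5] at hsum
        omega
    · have h2 : m % 2 = 1 := Nat.odd_iff.mp ho
      have hFeq : F = Finset.Icc (m - m/2) (m + m/2) := by
        ext j
        simp only [hF, Finset.mem_filter, Finset.mem_range, Finset.mem_Icc, hcond]
        omega
      have hsum := gauss_Icc (m - m/2) (2*(m/2))
      rw [show m - m/2 + 2*(m/2) = m + m/2 by omega] at hsum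
      have : 2*(m - m/2) + 2*(m/2) = 2*m := by omega
      rw [this] at hsum
      constructor
      · rw [hFeq, Nat.card_Icc]; omega
      · rw [hFeq]
        have h4 : 2*(m/2) + 1 = m := by omega
        rw [h4] at hsum
        have h5 : 2*m*m = 2*(m*m) := by ring
        rw [h5] at hsum
        omega
  obtain ⟨hFcard, hFsum⟩ := hcards
  refine ⟨fun i j => if (cond j.val ↔ i = 0) then 2*b - 2*j.val else 2*j.val + 1,
    ?_, ?_, ⟨2*b+1, ?_⟩, ?_⟩
  · intro i j
    have hj : (j : ℕ) < b := j.isLt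
    simp only [Finset.mem_Icc]
    split <;> omega
  · rintro ⟨i, j⟩ ⟨i', j'⟩ h
    simp only at h
    have hj : (j : ℕ) < b := j.isLt
    have hj' : (j' : ℕ) < b := j'.isLt
    have hii : ∀ x : Fin 2, x = 0 ∨ x = 1 := by decide
    split_ifs at h with h1 h2 h2
    · have hjj : j = j' := by
        apply Fin.ext; omega
      subst hjj
      rcases hii i with rfl | rfl <;> rcases hii i' with rfl | rfl <;> simp_all
    · omega
    · omega
    · have hjj : j = j' := by
        apply Fin.ext; omega
      subst hjj
      rcases hii i with rfl | rfl <;> rcases hii i' with rfl | rfl <;> simp_all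
  · intro j
    have hj : (j : ℕ) < b := j.isLt
    rw [Fin.sum_univ_two]
    simp only [show ((0:Fin 2) = 0) ↔ True by simp, show ((1:Fin 2) = 0) ↔ False by simp,
      iff_true, iff_false]
    by_cases hc : cond j.val
    · rw [if_pos hc, if_neg (by simpa using hc)]; omega
    · rw [if_neg hc, if_pos (by simpa using hc)]; omega
  · -- row sums
    right
    have h0 : (∑ j : Fin b, (if (cond j.val ↔ (0:Fin 2) = 0) then 2*b - 2*j.val else 2*j.val + 1))
        = b*b + m := by
      simp only [show ((0:Fin 2) = 0) ↔ True by simp, iff_true]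
      have hr : (∑ j : Fin b, (if cond j.val then 2*b - 2*j.val else 2*j.val + 1))
          = ∑ j ∈ Finset.range b, (if cond j then 2*b - 2*j else 2*j + 1) :=
        Fin.sum_univ_eq_sum_range (fun j => if cond j then 2*b - 2*j else 2*j + 1) b
      rw [hr]
      have hz : ((∑ j ∈ Finset.range b, (if cond j then 2*b - 2*j else 2*j + 1) : ℕ) : ℤ)
          = (b:ℤ)*b + m := by
        rw [Nat.cast_sum]
        have hterm : ∀ j ∈ Finset.range b,
            ((if cond j then 2*b - 2*j else 2*j + 1 : ℕ) : ℤ)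
            = (2*(j:ℤ) + 1) + (if cond j then (2*(b:ℤ) - 4*j - 1) else 0) := by
          intro j hj
          simp only [Finset.mem_range] at hj
          split_ifs with hc
          · push_cast [Nat.cast_sub (by omega : 2*j ≤ 2*b)]; ring
          · push_cast; ring
        rw [Finset.sum_congr rfl hterm, Finset.sum_add_distrib]
        have h1 : (∑ j ∈ Finset.range b, (2*(j:ℤ)+1)) = (b:ℤ)*b := by
          rw [Finset.sum_add_distrib, Finset.sum_const, ← Finset.mul_sum]
          have := Finset.sum_range_id_mul_two b
          have hc : ((∑ j ∈ Finset.range b, j : ℕ) : ℤ) * 2 = (b:ℤ)*(b-1) := by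
            rw [← Nat.cast_ofNat, ← Nat.cast_mul, this]
            push_cast [Nat.cast_sub (by omega : 1 ≤ b)]
            ring
          push_cast at hc ⊢
          simp only [Finset.card_range, nsmul_eq_mul]
          linarith
        have h2 : (∑ j ∈ Finset.range b, (if cond j then (2*(b:ℤ) - 4*j - 1) else 0)) = m := by
          rw [← Finset.sum_filter]
          have : (∑ j ∈ F, (2*(b:ℤ) - 4*j - 1))
              = F.card • (2*(b:ℤ) - 1) - 4 * ((∑ j ∈ F, j : ℕ) : ℤ) := by
            push_cast
            rw [Finset.sum_sub_distrib, Finset.sum_sub_distrib, Finset.sum_const,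
              Finset.sum_const, ← Finset.mul_sum]
            ring
          rw [this, hFcard, hFsum]
          push_cast
          have : (b:ℤ) = 2*m+1 := by exact_mod_cast congrArg Nat.cast hm
          rw [this]; ring
        rw [h1, h2]
      exact_mod_cast hz
    have hcol : ∀ j : Fin b,
        (if (cond j.val ↔ (0:Fin 2) = 0) then 2*b - 2*j.val else 2*j.val + 1)
        + (if (cond j.val ↔ (1:Fin 2) = 0) then 2*b - 2*j.val else 2*j.val + 1) = 2*b + 1 := by
      intro j
      have hj : (j : ℕ) < b := j.isLt
      simp only [show ((0:Fin 2) = 0) ↔ True by simp, show ((1:Fin 2) = 0) ↔ False by simp,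
        iff_true, iff_false]
      by_cases hc : cond j.val
      · rw [if_pos hc, if_neg (by simpa using hc)]; omega
      · rw [if_neg hc, if_pos (by simpa using hc)]; omega
    have htot : (∑ j : Fin b, (if (cond j.val ↔ (0:Fin 2) = 0) then 2*b - 2*j.val else 2*j.val + 1))
        + (∑ j : Fin b, (if (cond j.val ↔ (1:Fin 2) = 0) then 2*b - 2*j.val else 2*j.val + 1))
        = b * (2*b+1) := by
      rw [← Finset.sum_add_distrib]
      rw [Finset.sum_congr rfl (fun j _ => hcol j)]
      simp [mul_comm]
    beta_reduce
    rw [h0] at htot ⊢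
    have hbb : b*(2*b+1) = 2*(b*b) + b := by ring
    rw [hbb] at htot
    omega
end

section
/- Let m be even, m ≥ 4, and r ≥ 1. Suppose there exist an MRS(m,2;r) (r arrays of size m×2 on {1,…,2rm} with all row sums 2rm+1 and all column sums m(2rm+1)/2) and an MRS(m,m−2;r). If each entry of the MRS(m,m−2;r) is increased by 2rm and the i-th arrays are glued side by side, the resulting r arrays of size m×m have entries exactly {1,…,rm²}, all row sums equal to m(rm²+1)/2, and column sums taking exactly the two values m(2rm+1)/2 and m(rm(m−2)+1)/2+2rm². -/
open Finset

/-- Gluing an `MRS(m,2;r)` with an `MRS(m,m-2;r)` shifted up by `2rm` gives `r` arrays of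
size `m × m` with entries exactly `{1,…,rm²}`, all row sums `m(rm²+1)/2`, and column sums
taking exactly the two values `m(2rm+1)/2` and `m(rm(m-2)+1)/2 + 2rm²`. -/
theorem stmt_10 (m r : ℕ) (hm : Even m) (hm4 : 4 ≤ m) (hr : 1 ≤ r)
    (f : Fin r → Fin m → Fin 2 → ℕ)
    (hf1 : ∀ t i j, f t i j ∈ Finset.Icc 1 (2 * r * m))
    (hf2 : Function.Injective fun p : Fin r × Fin m × Fin 2 => f p.1 p.2.1 p.2.2)
    (hf3 : ∀ t i, ∑ j, f t i j = 2 * r * m + 1)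
    (hf4 : ∀ t j, 2 * ∑ i, f t i j = m * (2 * r * m + 1))
    (g : Fin r → Fin m → Fin (m - 2) → ℕ)
    (hg1 : ∀ t i j, g t i j ∈ Finset.Icc 1 (m * (m - 2) * r))
    (hg2 : Function.Injective fun p : Fin r × Fin m × Fin (m - 2) => g p.1 p.2.1 p.2.2)
    (hg3 : ∀ t i, 2 * ∑ j, g t i j = (m - 2) * (m * (m - 2) * r + 1))
    (hg4 : ∀ t j, 2 * ∑ i, g t i j = m * (m * (m - 2) * r + 1))
    (h : Fin r → Fin m → Fin m → ℕ)
    (hh : h = fun t i j =>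
      if hj : j.val < 2 then f t i ⟨j.val, hj⟩
      else g t i ⟨j.val - 2, by have := j.isLt; omega⟩ + 2 * r * m) :
    (∀ t i j, h t i j ∈ Finset.Icc 1 (r * m ^ 2)) ∧
    Function.Injective (fun p : Fin r × Fin m × Fin m => h p.1 p.2.1 p.2.2) ∧
    (∀ t i, 2 * ∑ j, h t i j = m * (r * m ^ 2 + 1)) ∧
    (∀ t j, 2 * ∑ i, h t i j = m * (2 * r * m + 1) ∨
            2 * ∑ i, h t i j = m * (m * (m - 2) * r + 1) + 4 * r * m ^ 2) ∧
    (∃ t j, 2 * ∑ i, h t i j = m * (2 * r * m + 1)) ∧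
    (∃ t j, 2 * ∑ i, h t i j = m * (m * (m - 2) * r + 1) + 4 * r * m ^ 2) := by
  obtain ⟨k, rfl⟩ : ∃ k, m = 2 + k := ⟨m - 2, by omega⟩
  have hk : (2 : ℕ) + k - 2 = k := by omega
  have hk2 : 2 ≤ k := by omega
  -- pointwise descriptions of h
  have hft : ∀ t i (j : Fin (2 + k)) (hj : j.val < 2),
      h t i j = f t i ⟨j.val, hj⟩ := by
    intro t i j hj
    simp only [hh]
    exact dif_pos hj
  have hgt : ∀ t i (j : Fin (2 + k)) (hj : ¬ j.val < 2),
      h t i j = g t i ⟨j.val - 2, by have := j.isLt; omega⟩ + 2 * r * (2 + k) := by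
    intro t i j hj
    simp only [hh]
    exact dif_neg hj
  -- key arithmetic identity
  have hkey : (2 + k) * (2 + k - 2) * r + 2 * r * (2 + k) = r * (2 + k) ^ 2 := by
    rw [hk]; ring
  -- column sum lemmas
  have colf : ∀ t (j : Fin (2 + k)), j.val < 2 →
      2 * ∑ i, h t i j = (2 + k) * (2 * r * (2 + k) + 1) := by
    intro t j hj
    rw [show (∑ i, h t i j) = ∑ i, f t i ⟨j.val, hj⟩ from
      Finset.sum_congr rfl fun i _ => hft t i j hj]
    exact hf4 t ⟨j.val, hj⟩
  have colg : ∀ t (j : Fin (2 + k)), 2 ≤ j.val →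
      2 * ∑ i, h t i j = (2 + k) * ((2 + k) * (2 + k - 2) * r + 1) + 4 * r * (2 + k) ^ 2 := by
    intro t j hj
    have hj2 : j.val - 2 < 2 + k - 2 := by have := j.isLt; omega
    have hs : (∑ i, h t i j)
        = (∑ i, g t i ⟨j.val - 2, hj2⟩) + (2 + k) * (2 * r * (2 + k)) := by
      rw [show (∑ i, h t i j) = ∑ i, (g t i ⟨j.val - 2, hj2⟩ + 2 * r * (2 + k)) from
        Finset.sum_congr rfl fun i _ => hgt t i j (by omega)]
      rw [Finset.sum_add_distrib, Finset.sum_const, Finset.card_univ, Fintype.card_fin,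
        smul_eq_mul]
    rw [hs]
    have h4 := hg4 t ⟨j.val - 2, hj2⟩
    have hC : 2 * ((2 + k) * (2 * r * (2 + k))) = 4 * r * (2 + k) ^ 2 := by ring
    set S := ∑ i, g t i ⟨j.val - 2, hj2⟩ with hS
    linarith [h4, hC]
  refine ⟨?_, ?_, ?_, ?_, ?_, ?_⟩
  · -- range
    intro t i j
    simp only [Finset.mem_Icc]
    rcases Nat.lt_or_ge j.val 2 with hj | hj
    · rw [hft t i j hj]
      have h1 := hf1 t i ⟨j.val, hj⟩
      simp only [Finset.mem_Icc] at h1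
      have hle : 2 * r * (2 + k) ≤ r * (2 + k) ^ 2 := by
        have hpos : (0:ℕ) ≤ (2 + k) * (2 + k - 2) * r := Nat.zero_le _
        omega
      exact ⟨h1.1, h1.2.trans hle⟩
    · rw [hgt t i j (by omega)]
      have h1 := hg1 t i ⟨j.val - 2, by have := j.isLt; omega⟩
      simp only [Finset.mem_Icc] at h1
      constructor
      · omega
      · omega
  · -- injectivity
    rintro ⟨t1, i1, j1⟩ ⟨t2, i2, j2⟩ hpq
    simp only at hpq
    rcases Nat.lt_or_ge j1.val 2 with h1 | h1 <;> rcases Nat.lt_or_ge j2.val 2 with h2 | h2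
    · rw [hft t1 i1 j1 h1, hft t2 i2 j2 h2] at hpq
      have h3 := hf2 (a₁ := (t1, i1, ⟨j1.val, h1⟩)) (a₂ := (t2, i2, ⟨j2.val, h2⟩)) hpq
      simp only [Prod.mk.injEq, Fin.mk.injEq] at h3
      exact Prod.ext h3.1 (Prod.ext h3.2.1 (Fin.ext h3.2.2))
    · exfalso
      rw [hft t1 i1 j1 h1, hgt t2 i2 j2 (by omega)] at hpq
      have b1 := hf1 t1 i1 ⟨j1.val, h1⟩
      have b2 := hg1 t2 i2 ⟨j2.val - 2, by have := j2.isLt; omega⟩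
      simp only [Finset.mem_Icc] at b1 b2
      have b2' : 1 ≤ g t2 i2 ⟨j2.val - 2, by have := j2.isLt; omega⟩ := b2.1
      linarith [b1.2, b2', hpq]
    · exfalso
      rw [hgt t1 i1 j1 (by omega), hft t2 i2 j2 h2] at hpq
      have b1 := hg1 t1 i1 ⟨j1.val - 2, by have := j1.isLt; omega⟩
      have b2 := hf1 t2 i2 ⟨j2.val, h2⟩
      simp only [Finset.mem_Icc] at b1 b2
      have b1' : 1 ≤ g t1 i1 ⟨j1.val - 2, by have := j1.isLt; omega⟩ := b1.1
      linarith [b1', b2.2, hpq]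
    · rw [hgt t1 i1 j1 (by omega), hgt t2 i2 j2 (by omega)] at hpq
      have hpq' : g t1 i1 ⟨j1.val - 2, by have := j1.isLt; omega⟩
          = g t2 i2 ⟨j2.val - 2, by have := j2.isLt; omega⟩ :=
        Nat.add_right_cancel hpq
      have h3 := hg2 (a₁ := (t1, i1, ⟨j1.val - 2, by have := j1.isLt; omega⟩))
        (a₂ := (t2, i2, ⟨j2.val - 2, by have := j2.isLt; omega⟩)) hpq'
      simp only [Prod.mk.injEq, Fin.mk.injEq] at h3
      refine Prod.ext h3.1 (Prod.ext h3.2.1 (Fin.ext ?_))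
      show (j1 : ℕ) = (j2 : ℕ)
      have := h3.2.2
      omega
  · -- row sums
    intro t i
    rw [Fin.sum_univ_add (fun j : Fin (2 + k) => h t i j)]
    have e1 : ∑ i' : Fin 2, h t i (Fin.castAdd k i') = 2 * r * (2 + k) + 1 := by
      rw [← hf3 t i]
      refine Finset.sum_congr rfl fun i' _ => ?_
      rw [hft t i (Fin.castAdd k i') i'.isLt]
      exact congrArg (f t i) (Fin.ext rfl)
    have e2 : ∑ j' : Fin k, h t i (Fin.natAdd 2 j')
        = (∑ j, g t i j) + k * (2 * r * (2 + k)) := by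
      have step : ∀ j' : Fin k, h t i (Fin.natAdd 2 j')
          = g t i (Fin.cast hk.symm j') + 2 * r * (2 + k) := by
        intro j'
        rw [hgt t i (Fin.natAdd 2 j') (by simp only [Fin.coe_natAdd]; omega)]
        congr 1
        apply congrArg
        apply Fin.ext
        simp only [Fin.coe_natAdd, Fin.coe_cast]
        omega
      rw [Finset.sum_congr rfl fun j' _ => step j', Finset.sum_add_distrib,
        Finset.sum_const, Finset.card_univ, Fintype.card_fin, smul_eq_mul,
        Fin.sum_congr' (fun j => g t i j) hk.symm]
    rw [e1, e2]
    have hc : (2 + k - 2) * ((2 + k) * (2 + k - 2) * r + 1) = k * ((2 + k) * k * r + 1) := by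
      rw [hk]
    have h2 : 2 * ∑ j, g t i j = k * ((2 + k) * k * r + 1) := (hg3 t i).trans hc
    have key : (2 : ℤ) * ((2 * r * (2 + k) + 1) + ((∑ j, g t i j : ℕ) + k * (2 * r * (2 + k))))
        = (2 + k) * (r * (2 + k) ^ 2 + 1) := by
      have h2' : (2 : ℤ) * (∑ j, g t i j : ℕ) = k * ((2 + k) * k * r + 1) := by
        exact_mod_cast h2
      linear_combination h2'
    exact_mod_cast key
  · -- column sums take one of two values
    intro t j
    rcases Nat.lt_or_ge j.val 2 with hj | hj
    · exact Or.inl (colf t j hj)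
    · exact Or.inr (colg t j hj)
  · exact ⟨⟨0, by omega⟩, ⟨0, by omega⟩, colf _ _ (by simp)⟩
  · exact ⟨⟨0, by omega⟩, ⟨2, by omega⟩, colg _ _ (by simp)⟩
end

section
/- Let m be odd, r odd, W an m×m matrix with entries of the form r(m*_{ij}−1) where (m*_{ij}) is a fixed m×m array with entries {1,…,m²}, and let U^1,…,U^r be m×m matrices built from a Kotzig array KA(m,r) by taking the t-th column of the Kotzig array as the first column of U^t and completing cyclically (u^t_{i,j}=u^t_{i+1 mod m, j−1}). Then the matrices Z^t = U^t + W, t = 1,…,r, have entries which together are exactly the integers {1,…,rm²}, each appearing once. -/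
open Finset

lemma aux_div (r a b x y : ℕ) (ha1 : 1 ≤ a) (ha2 : a ≤ r) (hb1 : 1 ≤ b) (hb2 : b ≤ r)
    (h : a + r * x = b + r * y) : a = b ∧ x = y := by
  have hxy : x = y := by
    rcases lt_trichotomy x y with hlt | he | hgt
    · exfalso; nlinarith [Nat.mul_le_mul_left r (Nat.succ_le_of_lt hlt)]
    · exact he
    · exfalso; nlinarith [Nat.mul_le_mul_left r (Nat.succ_le_of_lt hgt)]
  subst hxy
  omega

/-- For `m, r` odd, the matrices `Z^t = U^t + W` built from a Kotzig array `KA(m,r)`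
(cyclic completion of each column) and `W = r(m* - 1)` for a fixed array `m*` with entries
`{1,…,m²}` have entries which together are exactly `{1,…,rm²}`, each appearing once. -/
theorem stmt_11 (m r : ℕ) (hm : Odd m) (hr : Odd r)
    (mstar : Fin m → Fin m → ℕ)
    (h1 : ∀ i j, mstar i j ∈ Finset.Icc 1 (m ^ 2))
    (h2 : Function.Injective fun p : Fin m × Fin m => mstar p.1 p.2)
    (K : Fin m → Fin r → ℕ)
    (hK1 : ∀ i, Function.Injective (K i) ∧ ∀ t, K i t ∈ Finset.Icc 1 r)
    (c : ℕ) (hK2 : ∀ t, ∑ i, K i t = c)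
    (Z : Fin r → Fin m → Fin m → ℕ)
    (hZ : Z = fun t i j =>
      K ⟨(i.val + j.val) % m, Nat.mod_lt _ i.pos⟩ t + r * (mstar i j - 1)) :
    (∀ t i j, Z t i j ∈ Finset.Icc 1 (r * m ^ 2)) ∧
    Function.Injective (fun p : Fin r × Fin m × Fin m => Z p.1 p.2.1 p.2.2) := by
  subst hZ
  constructor
  · intro t i j
    have hK := (hK1 ⟨(i.val + j.val) % m, Nat.mod_lt _ i.pos⟩).2 t
    rw [Finset.mem_Icc] at hK
    have hms := h1 i j
    rw [Finset.mem_Icc] at hms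
    have hmul : r * (mstar i j - 1) ≤ r * (m ^ 2 - 1) :=
      Nat.mul_le_mul_left r (by omega)
    have hm2 : 1 ≤ m ^ 2 := hms.1.trans hms.2
    have hsub : r * (m ^ 2 - 1) = r * m ^ 2 - r := by
      rw [Nat.mul_sub, Nat.mul_one]
    have hr2 : r ≤ r * m ^ 2 := Nat.le_mul_of_pos_right r (by omega)
    simp only [Finset.mem_Icc]
    omega
  · rintro ⟨t, i, j⟩ ⟨t', i', j'⟩ h
    simp only at h
    set idx : Fin m := ⟨(i.val + j.val) % m, Nat.mod_lt _ i.pos⟩ with hidx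
    set idx' : Fin m := ⟨(i'.val + j'.val) % m, Nat.mod_lt _ i'.pos⟩ with hidx'
    have hK := (hK1 idx).2 t
    have hK' := (hK1 idx').2 t'
    rw [Finset.mem_Icc] at hK hK'
    obtain ⟨hab, hxy⟩ := aux_div r _ _ _ _ hK.1 hK.2 hK'.1 hK'.2 h
    have hms := h1 i j
    have hms' := h1 i' j'
    rw [Finset.mem_Icc] at hms hms'
    have hmeq : mstar i j = mstar i' j' := by omega
    have := h2 (a₁ := (i, j)) (a₂ := (i', j')) hmeq
    have hij : i = i' := congrArg Prod.fst this
    have hjj : j = j' := congrArg Prod.snd this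
    subst hij; subst hjj
    have : idx = idx' := rfl
    rw [this] at hab
    have := (hK1 idx').1 hab
    simp [this]
end

section
/- In the matrix A of the previous construction (n ≥ 3 odd, s=(n+1)/2), after subtracting 1 from every entry, the k-th column sum equals (n+1)((n+2)+2(k−1)(n+1)−2)/2 for 1 ≤ k ≤ n+1; moreover for 2 ≤ j ≤ (n+1)/2, the sum of the j-th and the (n+3−j)-th column sums equals (n+1)(n²+3n+1), so that swapping (n+1)/2 suitably chosen entries between columns j and n+3−j makes both column sums equal to ((n+1)/2)(n²+3n+1). -/
open Finset

lemma gauss_aux (m : ℕ) : ∑ i : Fin (2*m+1+1), i.val = (m+1)*(2*m+1) := by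
  rw [Fin.sum_univ_eq_sum_range (fun i => i)]
  have h := Finset.sum_range_id_mul_two (2*m+1+1)
  rw [Nat.add_sub_cancel] at h
  have hP : (2*m+1+1)*(2*m+1) = 2*((m+1)*(2*m+1)) := by ring
  rw [hP] at h
  omega

lemma colsum_aux (m c : ℕ) :
    ∑ i : Fin (2*m+1+1),
      ((if c % 2 = 0 then 2*(m+1)*c + i.val + 1 else 2*(m+1)*(c+1) - i.val) - 1)
      = 4*(m+1)^2*c + (m+1)*(2*m+1) := by
  have hg : ∑ i : Fin (2*m+1+1), i.val = (m+1)*(2*m+1) := gauss_aux m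
  by_cases hc : c % 2 = 0
  · simp only [if_pos hc, Nat.add_sub_cancel]
    rw [Finset.sum_add_distrib, hg, Finset.sum_const, Finset.card_univ, Fintype.card_fin,
      smul_eq_mul]
    ring
  · simp only [if_neg hc]
    have key : ∀ i : Fin (2*m+1+1),
        (2*(m+1)*(c+1) - i.val - 1) + (i.val + 1) = 2*(m+1)*(c+1) := by
      intro i
      have h1 : i.val + 1 ≤ 2*(m+1) := by have := i.isLt; omega
      have h2 : 2*(m+1) ≤ 2*(m+1)*(c+1) := Nat.le_mul_of_pos_right _ (Nat.succ_pos _)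
      omega
    have hsum : (∑ i : Fin (2*m+1+1), (2*(m+1)*(c+1) - i.val - 1))
        + (∑ i : Fin (2*m+1+1), (i.val + 1)) = (2*m+1+1) * (2*(m+1)*(c+1)) := by
      rw [← Finset.sum_add_distrib]
      rw [Finset.sum_congr rfl (fun i _ => key i), Finset.sum_const, Finset.card_univ,
        Fintype.card_fin, smul_eq_mul]
    have h2 : ∑ i : Fin (2*m+1+1), (i.val + 1) = (m+1)*(2*m+1) + (2*m+1+1) := by
      rw [Finset.sum_add_distrib, hg, Finset.sum_const, Finset.card_univ, Fintype.card_fin,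
        smul_eq_mul, mul_one]
    rw [h2] at hsum
    have hid : (2*m+1+1) * (2*(m+1)*(c+1))
        = (4*(m+1)^2*c + (m+1)*(2*m+1)) + ((m+1)*(2*m+1) + (2*m+1+1)) := by ring
    omega

/-- After subtracting 1 from every entry of the matrix `A` of the previous construction,
the `k`-th column sum equals `(n+1)((n+2)+2(k-1)(n+1)-2)/2`; moreover for `2 ≤ j ≤ (n+1)/2`
the `j`-th and `(n+3-j)`-th column sums add to `(n+1)(n²+3n+1)`, and swapping `(n+1)/2`
suitably chosen entries between these two columns makes both column sums equal to
`((n+1)/2)(n²+3n+1)`.  (Indices of rows and columns below are 0-based.) -/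
theorem stmt_13 (n : ℕ) (hn : Odd n) (hn3 : 3 ≤ n) (s : ℕ) (hs : s = (n + 1) / 2)
    (B : Fin (n + 1) → Fin (n + 1) → ℕ)
    (hB : B = fun i j =>
      (if j.val % 2 = 0 then 2 * s * j.val + i.val + 1 else 2 * s * (j.val + 1) - i.val) - 1) :
    (∀ k : Fin (n + 1), 2 * ∑ i, B i k = (n + 1) * ((n + 2) + 2 * k.val * (n + 1) - 2)) ∧
    (∀ j : Fin (n + 1), 1 ≤ j.val → j.val ≤ (n + 1) / 2 - 1 →
      ∀ hj' : n + 1 - j.val < n + 1,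
        (∑ i, B i j) + (∑ i, B i ⟨n + 1 - j.val, hj'⟩) = (n + 1) * (n ^ 2 + 3 * n + 1) ∧
        ∃ S : Finset (Fin (n + 1)), S.card = (n + 1) / 2 ∧
          (∑ i ∈ S, B i ⟨n + 1 - j.val, hj'⟩) + (∑ i ∈ Sᶜ, B i j)
            = ((n + 1) / 2) * (n ^ 2 + 3 * n + 1) ∧
          (∑ i ∈ S, B i j) + (∑ i ∈ Sᶜ, B i ⟨n + 1 - j.val, hj'⟩)
            = ((n + 1) / 2) * (n ^ 2 + 3 * n + 1)) := by
  obtain ⟨m, hm⟩ := hn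
  subst hm
  have hs2 : s = m + 1 := by omega
  subst hs2
  constructor
  · intro k
    simp only [hB]
    rw [colsum_aux m k.val]
    have h2 : ∀ X : ℕ, 2*m+1+2 + X - 2 = 2*m+1 + X := fun X => by omega
    rw [h2]
    ring
  · intro j hj1 hj2 hj'
    simp only [hB, Fin.val_mk]
    obtain ⟨e, he⟩ : ∃ e, 2*j.val + e = 2*m+2 := ⟨2*m+2 - 2*j.val, by omega⟩
    have hJ' : 2*m+1+1 - j.val = j.val + e := by omega
    rw [hJ']
    have he' : 2*(j.val : ℤ) + (e : ℤ) = 2*(m : ℤ)+2 := by exact_mod_cast he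
    have hdiff : ∀ i : Fin (2*m+1+1),
        ((if (j.val + e) % 2 = 0 then 2*(m+1)*(j.val+e) + i.val + 1
          else 2*(m+1)*(j.val+e+1) - i.val) - 1)
        = ((if j.val % 2 = 0 then 2*(m+1)*j.val + i.val + 1
          else 2*(m+1)*(j.val+1) - i.val) - 1) + 2*(m+1)*e := by
      intro i
      have hpar : (j.val + e) % 2 = j.val % 2 := by omega
      rw [hpar]
      by_cases hp : j.val % 2 = 0
      · simp only [if_pos hp]
        have hx : 2*(m+1)*(j.val+e) = 2*(m+1)*j.val + 2*(m+1)*e := by ring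
        rw [hx]
        omega
      · simp only [if_neg hp]
        have hle : i.val + 1 ≤ 2*(m+1)*(j.val+1) :=
          le_trans (by have := i.isLt; omega : i.val + 1 ≤ 2*(m+1))
            (Nat.le_mul_of_pos_right _ (Nat.succ_pos _))
        have hx : 2*(m+1)*(j.val+e+1) = 2*(m+1)*(j.val+1) + 2*(m+1)*e := by ring
        rw [hx]
        omega
    have hsumT : ∀ T : Finset (Fin (2*m+1+1)),
        (∑ i ∈ T, ((if (j.val + e) % 2 = 0 then 2*(m+1)*(j.val+e) + i.val + 1
          else 2*(m+1)*(j.val+e+1) - i.val) - 1))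
        = (∑ i ∈ T, ((if j.val % 2 = 0 then 2*(m+1)*j.val + i.val + 1
          else 2*(m+1)*(j.val+1) - i.val) - 1)) + T.card * (2*(m+1)*e) := by
      intro T
      rw [Finset.sum_congr rfl (fun i _ => hdiff i), Finset.sum_add_distrib,
        Finset.sum_const, smul_eq_mul]
    have hhalf : (2*m+1+1)/2 = m+1 := by omega
    refine ⟨?_, ?_⟩
    · rw [hsumT Finset.univ, colsum_aux, Finset.card_univ, Fintype.card_fin]
      zify
      linear_combination (4*((m:ℤ)+1)^2) * he'
    · have hcard : m + 1 ≤ (Finset.univ : Finset (Fin (2*m+1+1))).card := by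
        rw [Finset.card_univ, Fintype.card_fin]; omega
      obtain ⟨S, -, hS⟩ := Finset.exists_subset_card_eq hcard
      refine ⟨S, by rw [hS, hhalf], ?_, ?_⟩
      · rw [hsumT S, hS, add_right_comm, Finset.sum_add_sum_compl, colsum_aux, hhalf]
        zify
        linear_combination (2*((m:ℤ)+1)^2) * he'
      · rw [hsumT Sᶜ, Finset.card_compl, hS, Fintype.card_fin]
        have hc2 : 2*m+1+1 - (m+1) = m+1 := by omega
        rw [hc2, ← add_assoc, Finset.sum_add_sum_compl, colsum_aux, hhalf]
        zify
        linear_combination (2*((m:ℤ)+1)^2) * he'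
end

section
/- If the complete bipartite graph K_{m,n} (m,n ≥ 2) admits a local antimagic labeling inducing only 2 colors, then an m×n magic rectangle exists; consequently, if m and n have different parity, then χ_la(K_{m,n}) ≥ 3. -/
open Finset

lemma aux_const_14 (m n : ℕ) (hm : 2 ≤ m) (hn : 2 ≤ n) (f : Fin m → Fin n → ℕ)
    (hne : ∀ i j, (∑ j', f i j') ≠ (∑ i', f i' j))
    (hcard : (Finset.image (fun i => ∑ j', f i j') Finset.univ ∪
        Finset.image (fun j => ∑ i', f i' j) Finset.univ).card ≤ 2) :
    ∃ ρ σ, (∀ i, ∑ j, f i j = ρ) ∧ (∀ j, ∑ i, f i j = σ) := by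
  haveI : NeZero m := ⟨by omega⟩
  haveI : NeZero n := ⟨by omega⟩
  set A := Finset.image (fun i => ∑ j', f i j') (Finset.univ : Finset (Fin m)) with hA
  set B := Finset.image (fun j => ∑ i', f i' j) (Finset.univ : Finset (Fin n)) with hB
  have hdisj : Disjoint A B := by
    rw [Finset.disjoint_left]
    intro x hxA hxB
    simp only [hA, hB, Finset.mem_image, Finset.mem_univ, true_and] at hxA hxB
    obtain ⟨i, hi⟩ := hxA
    obtain ⟨j, hj⟩ := hxB
    exact hne i j (hi.trans hj.symm)
  have hAne : A.Nonempty := Finset.Nonempty.image ⟨⟨0, by omega⟩, Finset.mem_univ _⟩ _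
  have hBne : B.Nonempty := Finset.Nonempty.image ⟨⟨0, by omega⟩, Finset.mem_univ _⟩ _
  have hcu : A.card + B.card ≤ 2 := by
    rw [← Finset.card_union_of_disjoint hdisj]; exact hcard
  have hA1 : A.card = 1 := by
    have := Finset.card_pos.mpr hAne
    have := Finset.card_pos.mpr hBne
    omega
  have hB1 : B.card = 1 := by
    have := Finset.card_pos.mpr hAne
    have := Finset.card_pos.mpr hBne
    omega
  obtain ⟨ρ, hρ⟩ := Finset.card_eq_one.mp hA1
  obtain ⟨σ, hσ⟩ := Finset.card_eq_one.mp hB1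
  refine ⟨ρ, σ, fun i => ?_, fun j => ?_⟩
  · have : (∑ j', f i j') ∈ A := Finset.mem_image_of_mem _ (Finset.mem_univ i)
    rw [hρ, Finset.mem_singleton] at this; exact this
  · have : (∑ i', f i' j) ∈ B := Finset.mem_image_of_mem _ (Finset.mem_univ j)
    rw [hσ, Finset.mem_singleton] at this; exact this

lemma aux_sum_14 (m n : ℕ) (f : Fin m → Fin n → ℕ)
    (hb : ∀ i j, f i j ∈ Finset.Icc 1 (m * n))
    (hinj : Function.Injective (fun p : Fin m × Fin n => f p.1 p.2)) :
    (∑ p : Fin m × Fin n, f p.1 p.2) * 2 = (m * n) * (m * n + 1) := by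
  have himg : Finset.image (fun p : Fin m × Fin n => f p.1 p.2) Finset.univ
      = Finset.Icc 1 (m * n) := by
    apply Finset.eq_of_subset_of_card_le
    · intro x hx
      simp only [Finset.mem_image] at hx
      obtain ⟨p, _, rfl⟩ := hx
      exact hb p.1 p.2
    · rw [Nat.card_Icc, Finset.card_image_of_injective _ hinj]
      simp
  have hsum : ∑ p : Fin m × Fin n, f p.1 p.2 = ∑ k ∈ Finset.Icc 1 (m*n), k := by
    rw [← himg, Finset.sum_image (fun a _ b _ h => hinj h)]
  have h2 : ∑ k ∈ Finset.Icc 1 (m*n), k = ∑ k ∈ Finset.range (m*n+1), k := by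
    rw [Finset.range_eq_Ico, ← Finset.Ico_add_one_right_eq_Icc]
    rw [Finset.sum_Ico_eq_sum_range, Finset.sum_Ico_eq_sum_range]
    simp only [Nat.sub_zero, zero_add, Nat.succ_sub_one]
    rw [Finset.sum_range_succ']
    simp [add_comm]
  rw [hsum, h2, Finset.sum_range_id_mul_two]
  simp [Nat.add_sub_cancel, Nat.mul_comm]

/-- If `K_{m,n}` (`m, n ≥ 2`) admits a local antimagic labeling inducing only 2 colors,
then an `m × n` magic rectangle exists; consequently, if `m` and `n` have different parity
then `χ_la(K_{m,n}) ≥ 3`.  Edges of `K_{m,n}` are indexed by `Fin m × Fin n`, the weight of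
the `i`-th vertex of the `m`-part is the `i`-th row sum and the weight of the `j`-th vertex
of the `n`-part is the `j`-th column sum. -/
theorem stmt_14 (m n : ℕ) (hm : 2 ≤ m) (hn : 2 ≤ n) :
    (∀ f : Fin m → Fin n → ℕ,
      (∀ i j, f i j ∈ Finset.Icc 1 (m * n)) →
      Function.Injective (fun p : Fin m × Fin n => f p.1 p.2) →
      (∀ i j, (∑ j', f i j') ≠ (∑ i', f i' j)) →
      ((Finset.image (fun i => ∑ j', f i j') Finset.univ ∪
        Finset.image (fun j => ∑ i', f i' j) Finset.univ).card = 2) →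
      ∃ (g : Fin m → Fin n → ℕ) (ρ σ : ℕ),
        (∀ i j, g i j ∈ Finset.Icc 1 (m * n)) ∧
        Function.Injective (fun p : Fin m × Fin n => g p.1 p.2) ∧
        (∀ i, ∑ j, g i j = ρ) ∧ (∀ j, ∑ i, g i j = σ)) ∧
    (m % 2 ≠ n % 2 →
      ∀ f : Fin m → Fin n → ℕ,
        (∀ i j, f i j ∈ Finset.Icc 1 (m * n)) →
        Function.Injective (fun p : Fin m × Fin n => f p.1 p.2) →
        (∀ i j, (∑ j', f i j') ≠ (∑ i', f i' j)) →
        3 ≤ (Finset.image (fun i => ∑ j', f i j') Finset.univ ∪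
             Finset.image (fun j => ∑ i', f i' j) Finset.univ).card) := by
  constructor
  · intro f hb hinj hne hcard
    obtain ⟨ρ, σ, hρ, hσ⟩ := aux_const_14 m n hm hn f hne (le_of_eq hcard)
    exact ⟨f, ρ, σ, hb, hinj, hρ, hσ⟩
  · intro hpar f hb hinj hne
    by_contra hlt
    push_neg at hlt
    obtain ⟨ρ, σ, hρ, hσ⟩ := aux_const_14 m n hm hn f hne (by omega)
    have htot := aux_sum_14 m n f hb hinj
    have hrow : (∑ p : Fin m × Fin n, f p.1 p.2) = m * ρ := by
      rw [Fintype.sum_prod_type]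
      simp only [hρ]
      simp [Finset.sum_const, mul_comm]
    have hcol : (∑ p : Fin m × Fin n, f p.1 p.2) = n * σ := by
      rw [Fintype.sum_prod_type, Finset.sum_comm]
      simp only [hσ]
      simp [Finset.sum_const, mul_comm]
    rcases Nat.even_or_odd m with hme | hmo
    · -- m even, n odd
      have hno : Odd n := by
        rcases Nat.even_or_odd n with h | h
        · exfalso; apply hpar; rw [Nat.even_iff.mp hme, Nat.even_iff.mp h]
        · exact h
      have heq : ρ * 2 = n * (m * n + 1) := by
        have hm0 : 0 < m := by omega
        apply Nat.eq_of_mul_eq_mul_left hm0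
        calc m * (ρ * 2) = (m * ρ) * 2 := by ring
          _ = (m * n) * (m * n + 1) := by rw [← hrow, htot]
          _ = m * (n * (m * n + 1)) := by ring
      have hodd : Odd (n * (m * n + 1)) := by
        refine hno.mul ?_
        have : Even (m * n) := hme.mul_right n
        exact Even.add_one this
      rw [← heq] at hodd
      have := Nat.odd_iff.mp hodd; omega
    · -- m odd, n even
      have hne' : Even n := by
        rcases Nat.even_or_odd n with h | h
        · exact h
        · exfalso; apply hpar; rw [Nat.odd_iff.mp hmo, Nat.odd_iff.mp h]
      have heq : σ * 2 = m * (m * n + 1) := by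
        have hn0 : 0 < n := by omega
        apply Nat.eq_of_mul_eq_mul_left hn0
        calc n * (σ * 2) = (n * σ) * 2 := by ring
          _ = (m * n) * (m * n + 1) := by rw [← hcol, htot]
          _ = n * (m * (m * n + 1)) := by ring
      have hodd : Odd (m * (m * n + 1)) := by
        refine hmo.mul ?_
        have : Even (m * n) := hne'.mul_left m
        exact Even.add_one this
      rw [← heq] at hodd
      have := Nat.odd_iff.mp hodd; omega
end

section
/- Let m ≥ 4 be even and n ≥ 3 odd with m ≢ n (mod 2). Given an m×n nearly magic rectangle (entries exactly {1,…,mn}, constant column sums m(mn+1)/2, row sums taking the two values (n(mn+1)±1)/2), labeling the edges of K_{m,n} so that the edges at the i-th vertex of the m-part receive the i-th row yields a local antimagic labeling of K_{m,n} with exactly 3 distinct vertex weights; hence χ_la(K_{m,n}) = 3. -/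
open Finset

private lemma sum_Icc_one_aux (N : ℕ) : 2 * ∑ x ∈ Finset.Icc 1 N, x = N * (N + 1) := by
  induction N with
  | zero => simp
  | succ k ih => rw [Finset.sum_Icc_succ_top (by omega)]; ring_nf; ring_nf at ih; omega

private lemma two_mul_total (m n : ℕ) (f : Fin m → Fin n → ℕ)
    (h1 : ∀ i j, f i j ∈ Finset.Icc 1 (m * n))
    (h2 : Function.Injective fun p : Fin m × Fin n => f p.1 p.2) :
    2 * ∑ i, ∑ j, f i j = (m * n) * (m * n + 1) := by
  have himg : Finset.image (fun p : Fin m × Fin n => f p.1 p.2) Finset.univ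
      = Finset.Icc 1 (m * n) := by
    apply Finset.eq_of_subset_of_card_le
    · intro x hx
      simp only [Finset.mem_image, Finset.mem_univ, true_and] at hx
      obtain ⟨p, hp⟩ := hx
      exact hp ▸ h1 p.1 p.2
    · rw [Finset.card_image_of_injective _ h2, Nat.card_Icc]
      simp
  have hsum : ∑ i, ∑ j, f i j = ∑ x ∈ Finset.Icc 1 (m * n), x := by
    rw [← himg, Finset.sum_image (fun a _ b _ h => h2 h)]
    exact (Fintype.sum_prod_type (fun p : Fin m × Fin n => f p.1 p.2)).symm
  rw [hsum]
  exact sum_Icc_one_aux (m * n)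

/-- For `m ≥ 4` even and `n ≥ 3` odd, labeling `K_{m,n}` by an `m × n` nearly magic
rectangle gives a local antimagic labeling with exactly 3 distinct vertex weights; hence
`χ_la(K_{m,n}) = 3`. -/
theorem stmt_15 (m n : ℕ) (hm : Even m) (hm4 : 4 ≤ m) (hn : Odd n) (hn3 : 3 ≤ n)
    (g : Fin m → Fin n → ℕ)
    (h1 : ∀ i j, g i j ∈ Finset.Icc 1 (m * n))
    (h2 : Function.Injective fun p : Fin m × Fin n => g p.1 p.2)
    (h3 : ∀ j, 2 * ∑ i, g i j = m * (m * n + 1))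
    (h4 : ∀ i, 2 * ∑ j, g i j = n * (m * n + 1) - 1 ∨ 2 * ∑ j, g i j = n * (m * n + 1) + 1) :
    ((∀ i j, (∑ j', g i j') ≠ (∑ i', g i' j)) ∧
      (Finset.image (fun i => ∑ j', g i j') Finset.univ ∪
       Finset.image (fun j => ∑ i', g i' j) Finset.univ).card = 3) ∧
    (∀ f : Fin m → Fin n → ℕ,
      (∀ i j, f i j ∈ Finset.Icc 1 (m * n)) →
      Function.Injective (fun p : Fin m × Fin n => f p.1 p.2) →
      (∀ i j, (∑ j', f i j') ≠ (∑ i', f i' j)) →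
      3 ≤ (Finset.image (fun i => ∑ j', f i j') Finset.univ ∪
           Finset.image (fun j => ∑ i', f i' j) Finset.univ).card) := by
  have hd2 : 2 ≤ m * n + 1 := by nlinarith
  -- m*X vs n*X comparisons
  have hmn : m ≠ n := by
    rintro rfl; exact (Nat.not_odd_iff_even.mpr hm) hn
  have hmul : ∀ a b : ℕ, a < b → a * (m * n + 1) + 2 ≤ b * (m * n + 1) := by
    intro a b hab
    have : (a + 1) * (m * n + 1) ≤ b * (m * n + 1) := Nat.mul_le_mul_right _ (by omega)
    nlinarith
  have hX1 : 1 ≤ n * (m * n + 1) := by nlinarith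
  -- Part (a).1 : distinctness of row and column weights
  have hdist : ∀ i j, (∑ j', g i j') ≠ (∑ i', g i' j) := by
    intro i j heq
    have hcol := h3 j
    have hrow := h4 i
    have h2eq : 2 * ∑ j', g i j' = 2 * ∑ i', g i' j := by rw [heq]
    rcases Nat.lt_or_ge m n with hlt | hge
    · have := hmul m n hlt
      omega
    · have hlt : n < m := lt_of_le_of_ne hge (Ne.symm hmn)
      have := hmul n m hlt
      omega
  refine ⟨⟨hdist, ?_⟩, ?_⟩
  -- Part (a).2 : exactly three weights
  · have htot := two_mul_total m n g h1 h2
    have hX : m * (n * (m * n + 1)) = (m * n) * (m * n + 1) := by ring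
    -- there is a row with small sum
    have hi1 : ∃ i, 2 * ∑ j', g i j' = n * (m * n + 1) - 1 := by
      by_contra hc
      push_neg at hc
      have hall : ∀ i, 2 * ∑ j', g i j' = n * (m * n + 1) + 1 := fun i =>
        (h4 i).resolve_left (hc i)
      have : ∑ i, 2 * ∑ j', g i j' = m * (n * (m * n + 1) + 1) := by
        rw [Finset.sum_congr rfl (fun i _ => hall i)]
        simp [Finset.sum_const, mul_comm]
      rw [← Finset.mul_sum] at this
      nlinarith
    have hi2 : ∃ i, 2 * ∑ j', g i j' = n * (m * n + 1) + 1 := by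
      by_contra hc
      push_neg at hc
      have hall : ∀ i, 2 * ∑ j', g i j' = n * (m * n + 1) - 1 := fun i =>
        (h4 i).resolve_right (hc i)
      have hsum : ∑ i, 2 * ∑ j', g i j' = m * (n * (m * n + 1) - 1) := by
        rw [Finset.sum_congr rfl (fun i _ => hall i)]
        simp [Finset.sum_const, mul_comm]
      rw [← Finset.mul_sum] at hsum
      have : m * (n * (m * n + 1) - 1) = m * (n * (m * n + 1)) - m := by
        rw [Nat.mul_sub, mul_one]
      have hle : m ≤ m * (n * (m * n + 1)) := Nat.le_mul_of_pos_right m (by omega)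
      omega
    obtain ⟨i1, hi1⟩ := hi1
    obtain ⟨i2, hi2⟩ := hi2
    have hn0 : (0 : ℕ) < n := by omega
    set j0 : Fin n := ⟨0, hn0⟩
    rw [Finset.card_eq_three]
    refine ⟨∑ j', g i1 j', ∑ j', g i2 j', ∑ i', g i' j0, by omega, hdist i1 j0, hdist i2 j0, ?_⟩
    apply Finset.Subset.antisymm
    · intro x hx
      simp only [Finset.mem_union, Finset.mem_image, Finset.mem_univ, true_and] at hx
      simp only [Finset.mem_insert, Finset.mem_singleton]
      rcases hx with ⟨i, hi⟩ | ⟨j, hj⟩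
      · rcases h4 i with h | h
        · left; omega
        · right; left; omega
      · right; right
        have := h3 j
        have := h3 j0
        omega
    · intro x hx
      simp only [Finset.mem_insert, Finset.mem_singleton] at hx
      simp only [Finset.mem_union, Finset.mem_image, Finset.mem_univ, true_and]
      rcases hx with rfl | rfl | rfl
      · exact Or.inl ⟨i1, rfl⟩
      · exact Or.inl ⟨i2, rfl⟩
      · exact Or.inr ⟨j0, rfl⟩
  -- Part (b) : lower bound
  · intro f hf1 hf2 hf3
    have htot := two_mul_total m n f hf1 hf2
    have hdisj : Disjoint (Finset.image (fun i => ∑ j', f i j') Finset.univ)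
        (Finset.image (fun j => ∑ i', f i' j) Finset.univ) := by
      rw [Finset.disjoint_left]
      intro x hx hx'
      simp only [Finset.mem_image, Finset.mem_univ, true_and] at hx hx'
      obtain ⟨i, hi⟩ := hx
      obtain ⟨j, hj⟩ := hx'
      exact hf3 i j (hi.trans hj.symm)
    rw [Finset.card_union_of_disjoint hdisj]
    have hc1 : 1 ≤ (Finset.image (fun j => ∑ i', f i' j) Finset.univ).card := by
      rw [Nat.one_le_iff_ne_zero, ← Nat.pos_iff_ne_zero, Finset.card_pos]
      exact ⟨∑ i', f i' ⟨0, by omega⟩, Finset.mem_image_of_mem _ (Finset.mem_univ _)⟩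
    have hc2 : 2 ≤ (Finset.image (fun i => ∑ j', f i j') Finset.univ).card := by
      by_contra hc
      push_neg at hc
      have hle : (Finset.image (fun i => ∑ j', f i j') Finset.univ).card ≤ 1 := by omega
      rw [Finset.card_le_one] at hle
      set i0 : Fin m := ⟨0, by omega⟩
      have hall : ∀ i : Fin m, ∑ j', f i j' = ∑ j', f i0 j' := fun i =>
        hle _ (Finset.mem_image_of_mem _ (Finset.mem_univ _))
          _ (Finset.mem_image_of_mem _ (Finset.mem_univ _))
      have hsum : ∑ i, ∑ j', f i j' = m * ∑ j', f i0 j' := by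
        rw [Finset.sum_congr rfl (fun i _ => hall i)]
        simp [Finset.sum_const, mul_comm]
      rw [hsum] at htot
      have hodd : Odd (n * (m * n + 1)) := by
        refine hn.mul ?_
        obtain ⟨k, hk⟩ := hm
        exact ⟨k * n, by rw [hk]; ring⟩
      have hX : m * (n * (m * n + 1)) = (m * n) * (m * n + 1) := by ring
      rw [← hX] at htot
      have h2s : 2 * ∑ j', f i0 j' = n * (m * n + 1) := by
        have : m * (2 * ∑ j', f i0 j') = m * (n * (m * n + 1)) := by
          rw [← htot]; ring
        exact Nat.eq_of_mul_eq_mul_left (by omega) this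
      obtain ⟨c, hcc⟩ := hodd
      omega
    omega
end
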